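/- Let ε = exp(2πi/7) and define the 3×3 complex matrices E₁ = (1/7)·[[1,1,1],[1,1,1],[1,1,1]], E₂ = (1/7)·[[1,ε⁶,ε²],[ε,1,ε³],[ε⁵,ε⁴,1]], E₃ = (1/7)·[[1,ε²,ε³],[ε⁵,1,ε],[ε⁴,ε⁶,1]], E₄ = (1/7)·[[1,ε⁴,ε⁶],[ε³,1,ε²],[ε,ε⁵,1]], and E₅, E₆, E₇ the entrywise complex conjugates of E₂, E₃, E₄ respectively. Then Tr(E_i E_j) = 2/49 for all i ≠ j; equivalently, the rank-one projections P_i = (7/3)·E_i satisfy Tr(P_i P_j) = 2/9 for i ≠ j. -/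

import Mathlib

open Matrix

/-- `ε = exp(2πi/7)`. -/
noncomputable def eps : ℂ := Complex.exp (2 * Real.pi * Complex.I / 7)

/-- The seven matrices of the qutrit example of Section 6. -/
noncomputable def qutritPOVM : Fin 7 → Matrix (Fin 3) (Fin 3) ℂ :=
  ![(1 / 7 : ℂ) • !![1, 1, 1; 1, 1, 1; 1, 1, 1],
    (1 / 7 : ℂ) • !![1, eps ^ 6, eps ^ 2; eps, 1, eps ^ 3; eps ^ 5, eps ^ 4, 1],
    (1 / 7 : ℂ) • !![1, eps ^ 2, eps ^ 3; eps ^ 5, 1, eps; eps ^ 4, eps ^ 6, 1],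
    (1 / 7 : ℂ) • !![1, eps ^ 4, eps ^ 6; eps ^ 3, 1, eps ^ 2; eps, eps ^ 5, 1],
    ((1 / 7 : ℂ) • !![1, eps ^ 6, eps ^ 2; eps, 1, eps ^ 3; eps ^ 5, eps ^ 4, 1]).map (starRingEnd ℂ),
    ((1 / 7 : ℂ) • !![1, eps ^ 2, eps ^ 3; eps ^ 5, 1, eps; eps ^ 4, eps ^ 6, 1]).map (starRingEnd ℂ),
    ((1 / 7 : ℂ) • !![1, eps ^ 4, eps ^ 6; eps ^ 3, 1, eps ^ 2; eps, eps ^ 5, 1]).map (starRingEnd ℂ)]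

lemma eps7 : eps ^ 7 = 1 := by
  rw [eps, ← Complex.exp_nat_mul]
  norm_num
  rw [show (7:ℂ) * (2 * Real.pi * Complex.I / 7) = 2 * Real.pi * Complex.I by ring,
    Complex.exp_two_pi_mul_I]

lemma eps_ne_one : eps ≠ 1 := by
  intro h
  rw [eps, Complex.exp_eq_one_iff] at h
  obtain ⟨n, hn⟩ := h
  have hpi : (Real.pi : ℂ) ≠ 0 := by
    exact_mod_cast Complex.ofReal_ne_zero.mpr Real.pi_ne_zero
  have hI := Complex.I_ne_zero
  have h2 : (2 * (Real.pi:ℂ) * Complex.I) ≠ 0 :=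
    mul_ne_zero (mul_ne_zero two_ne_zero hpi) hI
  have h7 : ((7 * n : ℤ) : ℂ) = 1 := by
    push_cast
    field_simp at hn
    have key : ((7 : ℂ) * n) * (2 * (Real.pi:ℂ) * Complex.I) = 1 * (2 * (Real.pi:ℂ) * Complex.I) := by
      linear_combination -(2 * (Real.pi:ℂ) * Complex.I) * hn
    linear_combination mul_right_cancel₀ h2 key
  have : (7 * n : ℤ) = 1 := by exact_mod_cast h7
  omega

lemma eps_sum : 1 + eps + eps^2 + eps^3 + eps^4 + eps^5 + eps^6 = 0 := by
  have h := eps7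
  have h1 := eps_ne_one
  have h2 : (eps - 1) * (1 + eps + eps^2 + eps^3 + eps^4 + eps^5 + eps^6) = 0 := by
    linear_combination h
  rcases mul_eq_zero.mp h2 with h' | h'
  · exact absurd (by linear_combination h' : eps = 1) h1
  · exact h'

lemma eps_conj : (starRingEnd ℂ) eps = eps ^ 6 := by
  have hne : eps ≠ 0 := Complex.exp_ne_zero _
  have hinv : eps ^ 6 * eps = 1 := by linear_combination eps7
  have hc : (starRingEnd ℂ) eps * eps = 1 := by
    rw [eps, ← Complex.exp_conj, ← Complex.exp_add]
    rw [show (starRingEnd ℂ) (2 * (Real.pi:ℂ) * Complex.I / 7) = 2 * (Real.pi:ℂ) * (-Complex.I) / 7 by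
      simp [map_div₀, Complex.conj_I, Complex.conj_ofReal, map_ofNat]]
    rw [show 2 * (Real.pi:ℂ) * (-Complex.I) / 7 + 2 * (Real.pi:ℂ) * Complex.I / 7 = 0 by ring,
      Complex.exp_zero]
  exact mul_right_cancel₀ hne (hc.trans hinv.symm)

lemma ep8 : eps ^ 8 = eps ^ 1 := by linear_combination (eps ^ 1) * eps7
lemma ep9 : eps ^ 9 = eps ^ 2 := by linear_combination (eps ^ 2) * eps7
lemma ep10 : eps ^ 10 = eps ^ 3 := by linear_combination (eps ^ 3) * eps7
lemma ep11 : eps ^ 11 = eps ^ 4 := by linear_combination (eps ^ 4) * eps7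
lemma ep12 : eps ^ 12 = eps ^ 5 := by linear_combination (eps ^ 5) * eps7
lemma ep13 : eps ^ 13 = eps ^ 6 := by linear_combination (eps ^ 6) * eps7
lemma ep14 : eps ^ 14 = eps ^ 0 := by linear_combination (eps ^ 0 + eps ^ 7) * eps7
lemma ep15 : eps ^ 15 = eps ^ 1 := by linear_combination (eps ^ 1 + eps ^ 8) * eps7
lemma ep16 : eps ^ 16 = eps ^ 2 := by linear_combination (eps ^ 2 + eps ^ 9) * eps7
lemma ep17 : eps ^ 17 = eps ^ 3 := by linear_combination (eps ^ 3 + eps ^ 10) * eps7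
lemma ep18 : eps ^ 18 = eps ^ 4 := by linear_combination (eps ^ 4 + eps ^ 11) * eps7
lemma ep19 : eps ^ 19 = eps ^ 5 := by linear_combination (eps ^ 5 + eps ^ 12) * eps7
lemma ep20 : eps ^ 20 = eps ^ 6 := by linear_combination (eps ^ 6 + eps ^ 13) * eps7
lemma ep21 : eps ^ 21 = eps ^ 0 := by linear_combination (eps ^ 0 + eps ^ 7 + eps ^ 14) * eps7
lemma ep22 : eps ^ 22 = eps ^ 1 := by linear_combination (eps ^ 1 + eps ^ 8 + eps ^ 15) * eps7
lemma ep23 : eps ^ 23 = eps ^ 2 := by linear_combination (eps ^ 2 + eps ^ 9 + eps ^ 16) * eps7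
lemma ep24 : eps ^ 24 = eps ^ 3 := by linear_combination (eps ^ 3 + eps ^ 10 + eps ^ 17) * eps7
lemma ep25 : eps ^ 25 = eps ^ 4 := by linear_combination (eps ^ 4 + eps ^ 11 + eps ^ 18) * eps7
lemma ep26 : eps ^ 26 = eps ^ 5 := by linear_combination (eps ^ 5 + eps ^ 12 + eps ^ 19) * eps7
lemma ep27 : eps ^ 27 = eps ^ 6 := by linear_combination (eps ^ 6 + eps ^ 13 + eps ^ 20) * eps7
lemma ep28 : eps ^ 28 = eps ^ 0 := by linear_combination (eps ^ 0 + eps ^ 7 + eps ^ 14 + eps ^ 21) * eps7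
lemma ep29 : eps ^ 29 = eps ^ 1 := by linear_combination (eps ^ 1 + eps ^ 8 + eps ^ 15 + eps ^ 22) * eps7
lemma ep30 : eps ^ 30 = eps ^ 2 := by linear_combination (eps ^ 2 + eps ^ 9 + eps ^ 16 + eps ^ 23) * eps7
lemma ep31 : eps ^ 31 = eps ^ 3 := by linear_combination (eps ^ 3 + eps ^ 10 + eps ^ 17 + eps ^ 24) * eps7
lemma ep32 : eps ^ 32 = eps ^ 4 := by linear_combination (eps ^ 4 + eps ^ 11 + eps ^ 18 + eps ^ 25) * eps7
lemma ep33 : eps ^ 33 = eps ^ 5 := by linear_combination (eps ^ 5 + eps ^ 12 + eps ^ 19 + eps ^ 26) * eps7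
lemma ep34 : eps ^ 34 = eps ^ 6 := by linear_combination (eps ^ 6 + eps ^ 13 + eps ^ 20 + eps ^ 27) * eps7
lemma ep35 : eps ^ 35 = eps ^ 0 := by linear_combination (eps ^ 0 + eps ^ 7 + eps ^ 14 + eps ^ 21 + eps ^ 28) * eps7
lemma ep36 : eps ^ 36 = eps ^ 1 := by linear_combination (eps ^ 1 + eps ^ 8 + eps ^ 15 + eps ^ 22 + eps ^ 29) * eps7
lemma ep37 : eps ^ 37 = eps ^ 2 := by linear_combination (eps ^ 2 + eps ^ 9 + eps ^ 16 + eps ^ 23 + eps ^ 30) * eps7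
lemma ep38 : eps ^ 38 = eps ^ 3 := by linear_combination (eps ^ 3 + eps ^ 10 + eps ^ 17 + eps ^ 24 + eps ^ 31) * eps7
lemma ep39 : eps ^ 39 = eps ^ 4 := by linear_combination (eps ^ 4 + eps ^ 11 + eps ^ 18 + eps ^ 25 + eps ^ 32) * eps7
lemma ep40 : eps ^ 40 = eps ^ 5 := by linear_combination (eps ^ 5 + eps ^ 12 + eps ^ 19 + eps ^ 26 + eps ^ 33) * eps7
lemma ep41 : eps ^ 41 = eps ^ 6 := by linear_combination (eps ^ 6 + eps ^ 13 + eps ^ 20 + eps ^ 27 + eps ^ 34) * eps7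
lemma ep42 : eps ^ 42 = eps ^ 0 := by linear_combination (eps ^ 0 + eps ^ 7 + eps ^ 14 + eps ^ 21 + eps ^ 28 + eps ^ 35) * eps7
lemma ep43 : eps ^ 43 = eps ^ 1 := by linear_combination (eps ^ 1 + eps ^ 8 + eps ^ 15 + eps ^ 22 + eps ^ 29 + eps ^ 36) * eps7
lemma ep44 : eps ^ 44 = eps ^ 2 := by linear_combination (eps ^ 2 + eps ^ 9 + eps ^ 16 + eps ^ 23 + eps ^ 30 + eps ^ 37) * eps7
lemma ep45 : eps ^ 45 = eps ^ 3 := by linear_combination (eps ^ 3 + eps ^ 10 + eps ^ 17 + eps ^ 24 + eps ^ 31 + eps ^ 38) * eps7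
lemma ep46 : eps ^ 46 = eps ^ 4 := by linear_combination (eps ^ 4 + eps ^ 11 + eps ^ 18 + eps ^ 25 + eps ^ 32 + eps ^ 39) * eps7
lemma ep47 : eps ^ 47 = eps ^ 5 := by linear_combination (eps ^ 5 + eps ^ 12 + eps ^ 19 + eps ^ 26 + eps ^ 33 + eps ^ 40) * eps7
lemma ep48 : eps ^ 48 = eps ^ 6 := by linear_combination (eps ^ 6 + eps ^ 13 + eps ^ 20 + eps ^ 27 + eps ^ 34 + eps ^ 41) * eps7
lemma ep49 : eps ^ 49 = eps ^ 0 := by linear_combination (eps ^ 0 + eps ^ 7 + eps ^ 14 + eps ^ 21 + eps ^ 28 + eps ^ 35 + eps ^ 42) * eps7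
lemma ep50 : eps ^ 50 = eps ^ 1 := by linear_combination (eps ^ 1 + eps ^ 8 + eps ^ 15 + eps ^ 22 + eps ^ 29 + eps ^ 36 + eps ^ 43) * eps7
lemma ep51 : eps ^ 51 = eps ^ 2 := by linear_combination (eps ^ 2 + eps ^ 9 + eps ^ 16 + eps ^ 23 + eps ^ 30 + eps ^ 37 + eps ^ 44) * eps7
lemma ep52 : eps ^ 52 = eps ^ 3 := by linear_combination (eps ^ 3 + eps ^ 10 + eps ^ 17 + eps ^ 24 + eps ^ 31 + eps ^ 38 + eps ^ 45) * eps7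
lemma ep53 : eps ^ 53 = eps ^ 4 := by linear_combination (eps ^ 4 + eps ^ 11 + eps ^ 18 + eps ^ 25 + eps ^ 32 + eps ^ 39 + eps ^ 46) * eps7
lemma ep54 : eps ^ 54 = eps ^ 5 := by linear_combination (eps ^ 5 + eps ^ 12 + eps ^ 19 + eps ^ 26 + eps ^ 33 + eps ^ 40 + eps ^ 47) * eps7
lemma ep55 : eps ^ 55 = eps ^ 6 := by linear_combination (eps ^ 6 + eps ^ 13 + eps ^ 20 + eps ^ 27 + eps ^ 34 + eps ^ 41 + eps ^ 48) * eps7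
lemma ep56 : eps ^ 56 = eps ^ 0 := by linear_combination (eps ^ 0 + eps ^ 7 + eps ^ 14 + eps ^ 21 + eps ^ 28 + eps ^ 35 + eps ^ 42 + eps ^ 49) * eps7
lemma ep57 : eps ^ 57 = eps ^ 1 := by linear_combination (eps ^ 1 + eps ^ 8 + eps ^ 15 + eps ^ 22 + eps ^ 29 + eps ^ 36 + eps ^ 43 + eps ^ 50) * eps7
lemma ep58 : eps ^ 58 = eps ^ 2 := by linear_combination (eps ^ 2 + eps ^ 9 + eps ^ 16 + eps ^ 23 + eps ^ 30 + eps ^ 37 + eps ^ 44 + eps ^ 51) * eps7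
lemma ep59 : eps ^ 59 = eps ^ 3 := by linear_combination (eps ^ 3 + eps ^ 10 + eps ^ 17 + eps ^ 24 + eps ^ 31 + eps ^ 38 + eps ^ 45 + eps ^ 52) * eps7
lemma ep60 : eps ^ 60 = eps ^ 4 := by linear_combination (eps ^ 4 + eps ^ 11 + eps ^ 18 + eps ^ 25 + eps ^ 32 + eps ^ 39 + eps ^ 46 + eps ^ 53) * eps7
lemma ep61 : eps ^ 61 = eps ^ 5 := by linear_combination (eps ^ 5 + eps ^ 12 + eps ^ 19 + eps ^ 26 + eps ^ 33 + eps ^ 40 + eps ^ 47 + eps ^ 54) * eps7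
lemma ep62 : eps ^ 62 = eps ^ 6 := by linear_combination (eps ^ 6 + eps ^ 13 + eps ^ 20 + eps ^ 27 + eps ^ 34 + eps ^ 41 + eps ^ 48 + eps ^ 55) * eps7
lemma ep63 : eps ^ 63 = eps ^ 0 := by linear_combination (eps ^ 0 + eps ^ 7 + eps ^ 14 + eps ^ 21 + eps ^ 28 + eps ^ 35 + eps ^ 42 + eps ^ 49 + eps ^ 56) * eps7
lemma ep64 : eps ^ 64 = eps ^ 1 := by linear_combination (eps ^ 1 + eps ^ 8 + eps ^ 15 + eps ^ 22 + eps ^ 29 + eps ^ 36 + eps ^ 43 + eps ^ 50 + eps ^ 57) * eps7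
lemma ep65 : eps ^ 65 = eps ^ 2 := by linear_combination (eps ^ 2 + eps ^ 9 + eps ^ 16 + eps ^ 23 + eps ^ 30 + eps ^ 37 + eps ^ 44 + eps ^ 51 + eps ^ 58) * eps7
lemma ep66 : eps ^ 66 = eps ^ 3 := by linear_combination (eps ^ 3 + eps ^ 10 + eps ^ 17 + eps ^ 24 + eps ^ 31 + eps ^ 38 + eps ^ 45 + eps ^ 52 + eps ^ 59) * eps7
lemma ep67 : eps ^ 67 = eps ^ 4 := by linear_combination (eps ^ 4 + eps ^ 11 + eps ^ 18 + eps ^ 25 + eps ^ 32 + eps ^ 39 + eps ^ 46 + eps ^ 53 + eps ^ 60) * eps7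
lemma ep68 : eps ^ 68 = eps ^ 5 := by linear_combination (eps ^ 5 + eps ^ 12 + eps ^ 19 + eps ^ 26 + eps ^ 33 + eps ^ 40 + eps ^ 47 + eps ^ 54 + eps ^ 61) * eps7
lemma ep69 : eps ^ 69 = eps ^ 6 := by linear_combination (eps ^ 6 + eps ^ 13 + eps ^ 20 + eps ^ 27 + eps ^ 34 + eps ^ 41 + eps ^ 48 + eps ^ 55 + eps ^ 62) * eps7
lemma ep70 : eps ^ 70 = eps ^ 0 := by linear_combination (eps ^ 0 + eps ^ 7 + eps ^ 14 + eps ^ 21 + eps ^ 28 + eps ^ 35 + eps ^ 42 + eps ^ 49 + eps ^ 56 + eps ^ 63) * eps7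
lemma ep71 : eps ^ 71 = eps ^ 1 := by linear_combination (eps ^ 1 + eps ^ 8 + eps ^ 15 + eps ^ 22 + eps ^ 29 + eps ^ 36 + eps ^ 43 + eps ^ 50 + eps ^ 57 + eps ^ 64) * eps7
lemma ep72 : eps ^ 72 = eps ^ 2 := by linear_combination (eps ^ 2 + eps ^ 9 + eps ^ 16 + eps ^ 23 + eps ^ 30 + eps ^ 37 + eps ^ 44 + eps ^ 51 + eps ^ 58 + eps ^ 65) * eps7


section Vec
variable {α : Type*} (a b c d e f g : α)
lemma v0 : ![a,b,c,d,e,f,g] 0 = a := rfl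
lemma v1 : ![a,b,c,d,e,f,g] 1 = b := rfl
lemma v2 : ![a,b,c,d,e,f,g] 2 = c := rfl
lemma v3 : ![a,b,c,d,e,f,g] 3 = d := rfl
lemma v4 : ![a,b,c,d,e,f,g] 4 = e := rfl
lemma v5 : ![a,b,c,d,e,f,g] 5 = f := rfl
lemma v6 : ![a,b,c,d,e,f,g] 6 = g := rfl
lemma w0 (h : 0 < 7) : ![a,b,c,d,e,f,g] ⟨0,h⟩ = a := rfl
lemma w1 (h : 1 < 7) : ![a,b,c,d,e,f,g] ⟨1,h⟩ = b := rfl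
lemma w2 (h : 2 < 7) : ![a,b,c,d,e,f,g] ⟨2,h⟩ = c := rfl
lemma w3 (h : 3 < 7) : ![a,b,c,d,e,f,g] ⟨3,h⟩ = d := rfl
lemma w4 (h : 4 < 7) : ![a,b,c,d,e,f,g] ⟨4,h⟩ = e := rfl
lemma w5 (h : 5 < 7) : ![a,b,c,d,e,f,g] ⟨5,h⟩ = f := rfl
lemma w6 (h : 6 < 7) : ![a,b,c,d,e,f,g] ⟨6,h⟩ = g := rfl
end Vec


lemma map_conj_3 (a b c d e f g h i : ℂ) :
    (!![a,b,c;d,e,f;g,h,i]).map (starRingEnd ℂ) =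
      !![(starRingEnd ℂ) a, (starRingEnd ℂ) b, (starRingEnd ℂ) c;
         (starRingEnd ℂ) d, (starRingEnd ℂ) e, (starRingEnd ℂ) f;
         (starRingEnd ℂ) g, (starRingEnd ℂ) h, (starRingEnd ℂ) i] := by
  ext x y
  fin_cases x <;> fin_cases y <;> rfl

lemma overlap_scale {A B : Matrix (Fin 3) (Fin 3) ℂ} (h : (A * B).trace = 2 / 49) :
    (((7 / 3 : ℂ) • A) * ((7 / 3 : ℂ) • B)).trace = 2 / 9 := by
  rw [Matrix.smul_mul, Matrix.mul_smul, smul_smul, Matrix.trace_smul, h]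
  norm_num

set_option maxHeartbeats 8000000 in
/-- Constant pairwise overlaps: `Tr(E_i E_j) = 2/49` for `i ≠ j`, equivalently the
projections `P_i = (7/3)·E_i` satisfy `Tr(P_i P_j) = 2/9` for `i ≠ j`. -/
theorem qutritPOVM_overlap (i j : Fin 7) (hij : i ≠ j) :
    (qutritPOVM i * qutritPOVM j).trace = 2 / 49 ∧
    (((7 / 3 : ℂ) • qutritPOVM i) * ((7 / 3 : ℂ) • qutritPOVM j)).trace = 2 / 9 := by
  suffices h : (qutritPOVM i * qutritPOVM j).trace = 2 / 49 from ⟨h, overlap_scale h⟩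
  fin_cases i <;> fin_cases j <;>
    first
      | exact absurd rfl hij
      | (simp only [qutritPOVM, v0, v1, v2, v3, v4, v5, v6, w0, w1, w2, w3, w4, w5, w6]
         simp [map_conj_3, Matrix.trace_fin_three, Matrix.mul_apply, Fin.sum_univ_three,
           eps_conj, Matrix.smul_apply, Matrix.map_apply, map_pow, _root_.map_one,
           map_div₀, map_ofNat, Matrix.vecHead, Matrix.vecTail]
         ring_nf
         try simp only [ep8, ep9, ep10, ep11, ep12, ep13, ep14, ep15, ep16, ep17, ep18, ep19, ep20, ep21, ep22, ep23, ep24, ep25, ep26, ep27, ep28, ep29, ep30, ep31, ep32, ep33, ep34, ep35, ep36, ep37, ep38, ep39, ep40, ep41, ep42, ep43, ep44, ep45, ep46, ep47, ep48, ep49, ep50, ep51, ep52, ep53, ep54, ep55, ep56, ep57, ep58, ep59, ep60, ep61, ep62, ep63, ep64, ep65, ep66, ep67, ep68, ep69, ep70, ep71, ep72]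
         linear_combination (1/49 : ℂ) * eps_sum)
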